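/- For a ∈ [−1,1] and t ∈ [0,1] define Y(a,t) = 1 if a ≥ √t, Y(a,t) = −1 if a ≤ −√t, and Y(a,t) = 0 otherwise. Then for all a, b ∈ [−1,1] and every s ∈ {+1,−1}: ∫₀¹ |Y(a,t) − s·Y(b,t)| dt ≤ |a − s·b| · (|a| + |b|). -/

import Mathlib

open Real

noncomputable section

/-- The rounding function: `Y a t = 1` if `a ≥ √t`, `Y a t = -1` if `a ≤ -√t`,
and `Y a t = 0` otherwise. -/
def Y (a t : ℝ) : ℝ :=
  if Real.sqrt t ≤ a then 1 else if a ≤ -Real.sqrt t then -1 else 0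

lemma Y_eq (a t : ℝ) (ht : 0 < t) :
    Y a t = if t ≤ a ^ 2 then (if 0 ≤ a then 1 else -1) else 0 := by
  unfold Y
  have hst : 0 < Real.sqrt t := Real.sqrt_pos.mpr ht
  rcases le_or_gt t (a ^ 2) with hta | hta
  · have hsa : Real.sqrt t ≤ |a| := by
      rw [← Real.sqrt_sq_eq_abs]
      exact Real.sqrt_le_sqrt hta
    rcases le_or_gt 0 a with ha | ha
    · rw [abs_of_nonneg ha] at hsa
      simp [hsa, hta, ha]
    · rw [abs_of_neg ha] at hsa
      have h1 : ¬ Real.sqrt t ≤ a := by push_neg; linarith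
      have h3 : a ≤ -Real.sqrt t := by linarith
      simp [h1, h3, hta, not_le.mpr ha]
  · have h : |a| < Real.sqrt t := by
      rw [← Real.sqrt_sq_eq_abs]
      exact Real.sqrt_lt_sqrt (sq_nonneg a) hta
    have h1 : ¬ Real.sqrt t ≤ a := by
      push_neg; calc a ≤ |a| := le_abs_self a
        _ < Real.sqrt t := h
    have h3 : ¬ a ≤ -Real.sqrt t := by
      push_neg
      have := neg_abs_le a
      linarith
    simp [h1, h3, not_le.mpr hta]

lemma key (a b s : ℝ) (ha : a ∈ Set.Icc (-1 : ℝ) 1)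
    (hb : b ∈ Set.Icc (-1 : ℝ) 1) (hs : s = 1 ∨ s = -1) (hab : a ^ 2 ≤ b ^ 2) :
    ∫ t in (0 : ℝ)..1, |Y a t - s * Y b t| ≤ |a - s * b| * (|a| + |b|) := by
  have hs1 : |s| = 1 := by rcases hs with rfl | rfl <;> norm_num
  have ha2 : a ^ 2 ≤ 1 := by nlinarith [ha.1, ha.2]
  have hb2 : b ^ 2 ≤ 1 := by nlinarith [hb.1, hb.2]
  set ea : ℝ := if 0 ≤ a then 1 else -1 with hea
  set eb : ℝ := if 0 ≤ b then 1 else -1 with heb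
  have hint : ∫ t in (0 : ℝ)..1, |Y a t - s * Y b t|
      = |ea - s * eb| * a ^ 2 + (b ^ 2 - a ^ 2) := by
    rw [intervalIntegral.integral_of_le zero_le_one]
    have heq : Set.EqOn (fun t => |Y a t - s * Y b t|)
        (fun t => Set.indicator (Set.Ioc 0 (a ^ 2)) (fun _ => |ea - s * eb|) t
          + Set.indicator (Set.Ioc (a ^ 2) (b ^ 2)) (fun _ => (1 : ℝ)) t)
        (Set.Ioc 0 1) := by
      intro t ht
      have ht0 : 0 < t := ht.1
      simp only [Y_eq a t ht0, Y_eq b t ht0, ← hea, ← heb]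
      rcases le_or_gt t (a ^ 2) with hta | hta
      · have htb : t ≤ b ^ 2 := le_trans hta hab
        rw [Set.indicator_of_mem (Set.mem_Ioc.mpr ⟨ht0, hta⟩),
          Set.indicator_of_notMem (fun hm => absurd hm.1 (not_lt.mpr hta))]
        simp [hta, htb]
      · rw [Set.indicator_of_notMem (fun hm => absurd hm.2 (not_le.mpr hta))]
        rcases le_or_gt t (b ^ 2) with htb | htb
        · rw [Set.indicator_of_mem (Set.mem_Ioc.mpr ⟨hta, htb⟩)]
          have : |(0 : ℝ) - s * eb| = 1 := by
            rw [zero_sub, abs_neg, abs_mul, hs1, one_mul, heb]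
            split <;> norm_num
          simp only [if_neg (not_le.mpr hta), if_pos htb]
          simpa using this
        · rw [Set.indicator_of_notMem (fun hm => absurd hm.2 (not_le.mpr htb))]
          simp [not_le.mpr hta, not_le.mpr htb]
    rw [MeasureTheory.setIntegral_congr_fun measurableSet_Ioc heq]
    have hi1 : MeasureTheory.Integrable
        (fun t => Set.indicator (Set.Ioc (0:ℝ) (a ^ 2)) (fun _ => |ea - s * eb|) t)
        (MeasureTheory.volume.restrict (Set.Ioc (0:ℝ) 1)) := by
      apply MeasureTheory.Integrable.indicator _ measurableSet_Ioc
      exact MeasureTheory.integrable_const _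
    have hi2 : MeasureTheory.Integrable
        (fun t => Set.indicator (Set.Ioc (a ^ 2) (b ^ 2)) (fun _ => (1:ℝ)) t)
        (MeasureTheory.volume.restrict (Set.Ioc (0:ℝ) 1)) := by
      apply MeasureTheory.Integrable.indicator _ measurableSet_Ioc
      exact MeasureTheory.integrable_const _
    rw [MeasureTheory.integral_add hi1 hi2,
      MeasureTheory.setIntegral_indicator measurableSet_Ioc,
      MeasureTheory.setIntegral_indicator measurableSet_Ioc,
      Set.inter_eq_self_of_subset_right (Set.Ioc_subset_Ioc le_rfl ha2),
      Set.inter_eq_self_of_subset_right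
        (Set.Ioc_subset_Ioc (sq_nonneg a) hb2),
      MeasureTheory.setIntegral_const, MeasureTheory.setIntegral_const]
    rw [Real.volume_real_Ioc_of_le (sq_nonneg a), Real.volume_real_Ioc_of_le hab,
      smul_eq_mul, smul_eq_mul]
    ring
  rw [hint]
  rcases le_or_gt 0 a with h1 | h1 <;> rcases le_or_gt 0 b with h2 | h2
  · rw [hea, heb, if_pos h1, if_pos h2, abs_of_nonneg h1, abs_of_nonneg h2]
    rcases hs with rfl | rfl <;>
      [rcases abs_cases (a - 1 * b) with ⟨he, hsgn⟩ | ⟨he, hsgn⟩;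
       rcases abs_cases (a - -1 * b) with ⟨he, hsgn⟩ | ⟨he, hsgn⟩] <;>
      rw [he] <;> norm_num <;> nlinarith [hab, sq_nonneg (a + b), sq_nonneg (a - b)]
  · rw [hea, heb, if_pos h1, if_neg (not_le.mpr h2), abs_of_nonneg h1, abs_of_neg h2]
    rcases hs with rfl | rfl <;>
      [rcases abs_cases (a - 1 * b) with ⟨he, hsgn⟩ | ⟨he, hsgn⟩;
       rcases abs_cases (a - -1 * b) with ⟨he, hsgn⟩ | ⟨he, hsgn⟩] <;>
      rw [he] <;> norm_num <;> nlinarith [hab, sq_nonneg (a + b), sq_nonneg (a - b)]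
  · rw [hea, heb, if_neg (not_le.mpr h1), if_pos h2, abs_of_neg h1, abs_of_nonneg h2]
    rcases hs with rfl | rfl <;>
      [rcases abs_cases (a - 1 * b) with ⟨he, hsgn⟩ | ⟨he, hsgn⟩;
       rcases abs_cases (a - -1 * b) with ⟨he, hsgn⟩ | ⟨he, hsgn⟩] <;>
      rw [he] <;> norm_num <;> nlinarith [hab, sq_nonneg (a + b), sq_nonneg (a - b)]
  · rw [hea, heb, if_neg (not_le.mpr h1), if_neg (not_le.mpr h2), abs_of_neg h1, abs_of_neg h2]
    rcases hs with rfl | rfl <;>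
      [rcases abs_cases (a - 1 * b) with ⟨he, hsgn⟩ | ⟨he, hsgn⟩;
       rcases abs_cases (a - -1 * b) with ⟨he, hsgn⟩ | ⟨he, hsgn⟩] <;>
      rw [he] <;> norm_num <;> nlinarith [hab, sq_nonneg (a + b), sq_nonneg (a - b)]

/-- For all `a, b ∈ [-1,1]` and `s ∈ {+1,-1}`,
`∫₀¹ |Y(a,t) − s·Y(b,t)| dt ≤ |a − s·b|·(|a| + |b|)`. -/
theorem integral_Y_le (a b s : ℝ) (ha : a ∈ Set.Icc (-1 : ℝ) 1)
    (hb : b ∈ Set.Icc (-1 : ℝ) 1) (hs : s = 1 ∨ s = -1) :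
    ∫ t in (0 : ℝ)..1, |Y a t - s * Y b t| ≤ |a - s * b| * (|a| + |b|) := by
  rcases le_total (a ^ 2) (b ^ 2) with hab | hab
  · exact key a b s ha hb hs hab
  · have hss : s * s = 1 := by rcases hs with rfl | rfl <;> norm_num
    have hs1 : |s| = 1 := by rcases hs with rfl | rfl <;> norm_num
    have h1 : ∀ t, |Y a t - s * Y b t| = |Y b t - s * Y a t| := by
      intro t
      have hrw : Y b t - s * Y a t = -s * (Y a t - s * Y b t) := by
        have : -s * (Y a t - s * Y b t) = -s * Y a t + (s * s) * Y b t := by ring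
        rw [this, hss]; ring
      rw [hrw, abs_mul, abs_neg, hs1, one_mul]
    have h2 : |a - s * b| = |b - s * a| := by
      have hrw : b - s * a = -s * (a - s * b) := by
        have : -s * (a - s * b) = -s * a + (s * s) * b := by ring
        rw [this, hss]; ring
      rw [hrw, abs_mul, abs_neg, hs1, one_mul]
    calc ∫ t in (0 : ℝ)..1, |Y a t - s * Y b t|
        = ∫ t in (0 : ℝ)..1, |Y b t - s * Y a t| := by simp_rw [h1]
      _ ≤ |b - s * a| * (|b| + |a|) := key b a s hb ha hs hab
      _ = |a - s * b| * (|a| + |b|) := by rw [h2]; ring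

end
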